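/- Let 𝒩 be a nontrivial variety of groups, 𝒬 a variety of groups, and 𝒱 = 𝒩𝒬. Let G ∈ 𝒱, and let N be a normal subgroup of G with N ∈ 𝒩 and G/N ∈ 𝒬. Then for every subgroup H of G, dom_G^𝒱(H) ⊆ NH. In particular, dom_G^𝒱(H) ⊆ 𝒬(G)·H, where 𝒬(G) is the verbal subgroup of G associated to 𝒬. -/

import Mathlib

/-- A bundled group: a type in universe `u` together with a group structure. -/
structure GroupT : Type (u + 1) where
  carrier : Type u
  [str : Group carrier]

attribute [instance] GroupT.str

/-- A variety of groups: a class of groups closed under isomorphism, subgroups,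
homomorphic images, and arbitrary direct products indexed by types in the universe. -/
structure GroupVariety : Type (u + 1) where
  Mem : GroupT.{u} → Prop
  iso_closed : ∀ {G H : GroupT.{u}}, G.carrier ≃* H.carrier → Mem G → Mem H
  subgroup_closed : ∀ (G : GroupT.{u}) (H : Subgroup G.carrier), Mem G → Mem ⟨H⟩
  quotient_closed : ∀ (G H : GroupT.{u}) (f : G.carrier →* H.carrier),
      Function.Surjective f → Mem G → Mem H
  pi_closed : ∀ (ι : Type u) (f : ι → GroupT.{u}),
      (∀ i, Mem (f i)) → Mem ⟨∀ i, (f i).carrier⟩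

/-- A variety is nontrivial if it contains some nontrivial group and
does not contain all groups. -/
def GroupVariety.IsNontrivial (V : GroupVariety.{u}) : Prop :=
  (∃ G : GroupT.{u}, V.Mem G ∧ Nontrivial G.carrier) ∧ ∃ G : GroupT.{u}, ¬ V.Mem G

/-- The dominion of a subgroup `H` of `G` relative to a class `C` of groups:
all elements of `G` on which any two homomorphisms into a `C`-group agreeing on `H`
must agree. -/
def dominion (C : GroupT.{u} → Prop) (G : Type u) [Group G] (H : Subgroup G) : Set G :=
  {a | ∀ K : GroupT.{u}, C K → ∀ f g : G →* K.carrier, (∀ h ∈ H, f h = g h) → f a = g a}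

/-- The product variety `𝒩𝒬`: the class of groups having a normal subgroup in `𝒩`
with quotient in `𝒬`. -/
def ProductVariety (N Q : GroupVariety.{u}) (G : GroupT.{u}) : Prop :=
  ∃ (M : Subgroup G.carrier) (h : M.Normal),
    N.Mem ⟨M⟩ ∧ (letI := h; Q.Mem ⟨G.carrier ⧸ M⟩)

/-- The verbal subgroup `𝒬(G)`: the intersection of all normal subgroups of `G`
whose quotient lies in `𝒬`. -/
def verbalSubgroup (Q : GroupVariety.{u}) (G : Type u) [Group G] : Subgroup G :=
  ⨅ M ∈ {M : Subgroup G | ∃ h : M.Normal, (letI := h; Q.Mem ⟨G ⧸ M⟩)}, M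

open scoped Pointwise

namespace Stmt3Aux
universe u
variable (G : Type u) [Group G] (X : Type u) [MulAction G X] (A : Type u) [CommGroup A]

/-- `G` acting on `X → A` by permuting coordinates. -/
def permHom : G →* MulAut (X → A) where
  toFun x :=
    { toFun := fun p c => p (x⁻¹ • c)
      invFun := fun p c => p (x • c)
      left_inv := fun p => funext fun c => by
        show p (x⁻¹ • x • c) = p c
        rw [inv_smul_smul]
      right_inv := fun p => funext fun c => by
        show p (x • x⁻¹ • c) = p c
        rw [smul_inv_smul]
      map_mul' := fun p q => rfl }
  map_one' := MulEquiv.ext fun p => funext fun c => by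
    show p (1⁻¹ • c) = p c
    rw [inv_one, one_smul]
  map_mul' := fun x y => MulEquiv.ext fun p => funext fun c => by
    show p ((x * y)⁻¹ • c) = p (y⁻¹ • x⁻¹ • c)
    rw [mul_inv_rev, mul_smul]

variable {G X A}

lemma comm_aux (p q r : A) : r * q⁻¹ * (p * r⁻¹) = p * q⁻¹ := by
  rw [mul_comm r q⁻¹, mul_assoc, mul_comm p r⁻¹, mul_inv_cancel_left, mul_comm]

/-- The crossed-homomorphism style map `x ↦ (δ x, x)` into the wreath-like product. -/
noncomputable def cocycle (x₀ : X) (ε : A) :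
    G →* (X → A) ⋊[permHom G X A] G := by
  classical
  exact
  { toFun := fun x => ⟨fun c => (if c = x • x₀ then ε else 1) *
      (if c = x₀ then ε else 1)⁻¹, x⟩
    map_one' := by
      refine SemidirectProduct.ext ?_ rfl
      funext c
      show (if c = (1 : G) • x₀ then ε else 1) * (if c = x₀ then ε else 1)⁻¹ = 1
      rw [one_smul, mul_inv_cancel]
    map_mul' := fun x y => by
      refine SemidirectProduct.ext ?_ rfl
      funext c
      show (if c = (x * y) • x₀ then ε else 1) * (if c = x₀ then ε else 1)⁻¹ =
        ((if c = x • x₀ then ε else 1) * (if c = x₀ then ε else 1)⁻¹) *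
        ((if x⁻¹ • c = y • x₀ then ε else 1) * (if x⁻¹ • c = x₀ then ε else 1)⁻¹)
      simp only [inv_smul_eq_iff, smul_smul]
      exact (comm_aux _ _ _).symm }

lemma cocycle_eq_inr (x₀ : X) (ε : A) {x : G} (hx : x • x₀ = x₀) :
    cocycle x₀ ε x = SemidirectProduct.inr x := by
  classical
  refine SemidirectProduct.ext ?_ rfl
  funext c
  show (if c = x • x₀ then ε else 1) * (if c = x₀ then ε else 1)⁻¹ = 1
  rw [hx, mul_inv_cancel]

lemma cocycle_left_ne_one (x₀ : X) {ε : A} {x : G} (hx : x • x₀ ≠ x₀) (hε : ε ≠ 1) :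
    (cocycle x₀ ε x).left ≠ 1 := by
  classical
  intro h
  have h3 : (if x • x₀ = x • x₀ then ε else 1) * (if x • x₀ = x₀ then ε else 1)⁻¹ = (1 : A) :=
    congrFun h (x • x₀)
  rw [if_pos rfl, if_neg hx, inv_one, mul_one] at h3
  exact hε h3

/-- The embedding of `(X → A) × M` into the semidirect product, when `M` acts trivially. -/
def pairHom (M : Subgroup G) (htriv : ∀ m : M, permHom G X A (m : G) = 1) :
    ((X → A) × M) →* (X → A) ⋊[permHom G X A] G where
  toFun z := ⟨z.1, z.2⟩
  map_one' := rfl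
  map_mul' z w := by
    refine SemidirectProduct.ext ?_ rfl
    show z.1 * w.1 = z.1 * permHom G X A (z.2 : G) w.1
    rw [htriv z.2]
    rfl

lemma pairHom_injective (M : Subgroup G) (htriv : ∀ m : M, permHom G X A (m : G) = 1) :
    Function.Injective (pairHom M htriv) := by
  intro z w h
  exact Prod.ext (congrArg SemidirectProduct.left h)
    (Subtype.ext (congrArg SemidirectProduct.right h))

/-- Binary products stay in a variety. -/
lemma mem_prod (𝒩 : GroupVariety.{u}) (P Q : Type u) [Group P] [Group Q]
    (hP : 𝒩.Mem ⟨P⟩) (hQ : 𝒩.Mem ⟨Q⟩) : 𝒩.Mem ⟨P × Q⟩ := by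
  let f : ULift.{u} Bool → GroupT.{u} := fun i => cond i.down ⟨P⟩ ⟨Q⟩
  have h := 𝒩.pi_closed (ULift Bool) f (fun i => by
    rcases i with ⟨_ | _⟩
    · exact hQ
    · exact hP)
  refine 𝒩.iso_closed (G := ⟨∀ i, (f i).carrier⟩) ?_ h
  exact
    { toFun := fun u => (u ⟨true⟩, u ⟨false⟩)
      invFun := fun z i => match i with
        | ⟨true⟩ => z.1
        | ⟨false⟩ => z.2
      left_inv := fun u => funext fun i => by rcases i with ⟨_ | _⟩ <;> rfl
      right_inv := fun z => rfl
      map_mul' := fun u v => rfl }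

open scoped IsMulCommutative in
/-- The key lemma: the dominion relative to `𝒩𝒬` is contained in `M * H` for
any normal subgroup `M ∈ 𝒩` with `G ⧸ M ∈ 𝒬`. -/
lemma key (𝒩 𝒬 : GroupVariety.{u})
    (h𝒩 : ∃ B : GroupT.{u}, 𝒩.Mem B ∧ Nontrivial B.carrier)
    (G : Type u) [Group G] (M : Subgroup G) (hM : M.Normal) (hMmem : 𝒩.Mem ⟨↥M⟩)
    (hQmem : letI := hM; 𝒬.Mem ⟨G ⧸ M⟩) (H : Subgroup G) :
    dominion (ProductVariety 𝒩 𝒬) G H ⊆ (M : Set G) * (H : Set G) := by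
  letI := hM
  intro a ha
  rw [← Subgroup.normal_mul]
  by_contra haJ
  obtain ⟨B, hB, hBnt⟩ := h𝒩
  obtain ⟨ε, hε⟩ := exists_ne (1 : B.carrier)
  have hAmem : 𝒩.Mem ⟨↥(Subgroup.zpowers ε)⟩ := 𝒩.subgroup_closed B _ hB
  set εA : ↥(Subgroup.zpowers ε) := ⟨ε, Subgroup.mem_zpowers ε⟩ with hεAdef
  have hεA1 : εA ≠ 1 := fun h => hε (congrArg Subtype.val h)
  set x₀ : G ⧸ (M ⊔ H) := ((1 : G) : G ⧸ (M ⊔ H)) with hx₀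
  have hax : a • x₀ ≠ x₀ := by
    intro h
    apply haJ
    have h2 : ((a * 1 : G) : G ⧸ (M ⊔ H)) = ((1 : G) : G ⧸ (M ⊔ H)) := h
    rw [mul_one] at h2
    have h3 := QuotientGroup.eq.mp h2
    rw [mul_one] at h3
    exact (Subgroup.inv_mem_iff _).mp h3
  have hMfix : ∀ m ∈ M, ∀ c : G ⧸ (M ⊔ H), m • c = c := by
    intro m hm c
    induction c using QuotientGroup.induction_on with
    | H g =>
      show ((m * g : G) : G ⧸ (M ⊔ H)) = (g : G ⧸ (M ⊔ H))
      rw [QuotientGroup.eq]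
      have hm' : g⁻¹ * m⁻¹ * g ∈ M := by
        simpa using hM.conj_mem m⁻¹ (inv_mem hm) g⁻¹
      have he : (m * g)⁻¹ * g = g⁻¹ * m⁻¹ * g := by group
      rw [he]
      exact Subgroup.mem_sup_left hm'
  have hHfix : ∀ h ∈ H, h • x₀ = x₀ := by
    intro h hh
    show ((h * 1 : G) : G ⧸ (M ⊔ H)) = ((1 : G) : G ⧸ (M ⊔ H))
    rw [QuotientGroup.eq]
    simpa using Subgroup.mem_sup_right (inv_mem hh)
  -- the wreath-like group K
  have htriv : ∀ m : M,
      permHom G (G ⧸ (M ⊔ H)) ↥(Subgroup.zpowers ε) (m : G) = 1 := by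
    intro m
    refine MulEquiv.ext fun p => funext fun c => ?_
    show p ((m : G)⁻¹ • c) = p c
    rw [hMfix _ (inv_mem m.2) c]
  have hPmem : 𝒩.Mem ⟨(G ⧸ (M ⊔ H)) → ↥(Subgroup.zpowers ε)⟩ :=
    𝒩.pi_closed (G ⧸ (M ⊔ H)) (fun _ => ⟨↥(Subgroup.zpowers ε)⟩) (fun _ => hAmem)
  let ρ : ((G ⧸ (M ⊔ H)) → ↥(Subgroup.zpowers ε))
        ⋊[permHom G (G ⧸ (M ⊔ H)) ↥(Subgroup.zpowers ε)] G →* G ⧸ M :=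
    (QuotientGroup.mk' M).comp SemidirectProduct.rightHom
  have hρsurj : Function.Surjective ρ :=
    (QuotientGroup.mk'_surjective M).comp SemidirectProduct.rightHom_surjective
  have hrange : (pairHom M htriv).range = ρ.ker := by
    ext k
    rcases k with ⟨kl, kr⟩
    simp only [MonoidHom.mem_range, MonoidHom.mem_ker]
    constructor
    · rintro ⟨⟨p, m⟩, hpm⟩
      rw [← hpm]
      show ((m : G) : G ⧸ M) = 1
      rw [QuotientGroup.eq_one_iff]
      exact m.2
    · intro hk
      refine ⟨⟨kl, ⟨kr, ?_⟩⟩, rfl⟩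
      rw [← QuotientGroup.eq_one_iff]
      exact hk
  have hSmem : 𝒩.Mem ⟨↥ρ.ker⟩ := by
    refine 𝒩.iso_closed (G := ⟨((G ⧸ (M ⊔ H)) → ↥(Subgroup.zpowers ε)) × ↥M⟩)
      ((MonoidHom.ofInjective (pairHom_injective M htriv)).trans
        (MulEquiv.subgroupCongr hrange)) ?_
    exact mem_prod 𝒩 _ _ hPmem hMmem
  have hK : ProductVariety 𝒩 𝒬
      ⟨((G ⧸ (M ⊔ H)) → ↥(Subgroup.zpowers ε))
        ⋊[permHom G (G ⧸ (M ⊔ H)) ↥(Subgroup.zpowers ε)] G⟩ := by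
    refine ⟨ρ.ker, inferInstance, hSmem, ?_⟩
    exact 𝒬.iso_closed (QuotientGroup.quotientKerEquivOfSurjective ρ hρsurj).symm hQmem
  have hcon := ha _ hK (cocycle x₀ εA) SemidirectProduct.inr
    (fun h hh => cocycle_eq_inr x₀ εA (hHfix h hh))
  exact cocycle_left_ne_one x₀ hax hεA1 (by rw [hcon]; rfl)

end Stmt3Aux

theorem stmt3 (𝒩 𝒬 : GroupVariety.{u}) (h𝒩 : 𝒩.IsNontrivial)
    (G : Type u) [Group G] (hG : ProductVariety 𝒩 𝒬 ⟨G⟩)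
    (N : Subgroup G) [hN : N.Normal] (hNmem : 𝒩.Mem ⟨N⟩) (hQ : 𝒬.Mem ⟨G ⧸ N⟩)
    (H : Subgroup G) :
    dominion (ProductVariety 𝒩 𝒬) G H ⊆ (N : Set G) * (H : Set G) ∧
      dominion (ProductVariety 𝒩 𝒬) G H ⊆ (verbalSubgroup 𝒬 G : Set G) * (H : Set G) := by
  constructor
  · exact Stmt3Aux.key 𝒩 𝒬 h𝒩.1 G N hN hNmem hQ H
  · -- verbal subgroup facts
    have hmemV : ∀ x : G, x ∈ verbalSubgroup 𝒬 G ↔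
        ∀ M : Subgroup G, (∃ h : M.Normal, (letI := h; 𝒬.Mem ⟨G ⧸ M⟩)) → x ∈ M := by
      intro x
      rw [verbalSubgroup]
      simp only [Subgroup.mem_iInf]
      exact Iff.rfl
    have hNS : ∃ h : N.Normal, (letI := h; 𝒬.Mem ⟨G ⧸ N⟩) := ⟨hN, hQ⟩
    have hVle : verbalSubgroup 𝒬 G ≤ N := fun x hx => (hmemV x).mp hx N hNS
    have hVnormal : (verbalSubgroup 𝒬 G).Normal := by
      constructor
      intro n hn g
      rw [hmemV]
      intro M hM
      exact hM.choose.conj_mem n ((hmemV n).mp hn M hM) g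
    have hVmem : 𝒩.Mem ⟨↥(verbalSubgroup 𝒬 G)⟩ := by
      refine 𝒩.iso_closed (G := ⟨↥((verbalSubgroup 𝒬 G).subgroupOf N)⟩)
        (Subgroup.subgroupOfEquivOfLe hVle) ?_
      exact 𝒩.subgroup_closed ⟨↥N⟩ ((verbalSubgroup 𝒬 G).subgroupOf N) hNmem
    have hVQ : letI := hVnormal; 𝒬.Mem ⟨G ⧸ verbalSubgroup 𝒬 G⟩ := by
      letI := hVnormal
      let f : {M : Subgroup G // ∃ h : M.Normal, (letI := h; 𝒬.Mem ⟨G ⧸ M⟩)} →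
          GroupT.{u} := fun i => letI := i.2.choose; ⟨G ⧸ i.1⟩
      have hf : ∀ i, 𝒬.Mem (f i) := fun i => i.2.choose_spec
      have hpi := 𝒬.pi_closed _ f hf
      letI : ∀ i, Group (f i).carrier := fun i => (f i).str
      let Φ : G →* ∀ i, (f i).carrier :=
        { toFun := fun g i => letI := i.2.choose; ((g : G) : G ⧸ i.1)
          map_one' := rfl
          map_mul' := fun x y => rfl }
      have hker : Φ.ker = verbalSubgroup 𝒬 G := by
        ext x
        rw [hmemV, MonoidHom.mem_ker]
        constructor
        · intro hx M hM
          letI := hM.choose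
          have h1 : ((x : G) : G ⧸ M) = 1 := congrFun hx ⟨M, hM⟩
          exact (QuotientGroup.eq_one_iff x).mp h1
        · intro hx
          funext i
          letI := i.2.choose
          exact (QuotientGroup.eq_one_iff x).mpr (hx i.1 i.2)
      refine 𝒬.iso_closed (G := ⟨↥Φ.range⟩)
        (((QuotientGroup.quotientMulEquivOfEq hker.symm).trans
          (QuotientGroup.quotientKerEquivRange Φ)).symm) ?_
      exact 𝒬.subgroup_closed ⟨∀ i, (f i).carrier⟩ Φ.range hpi
    exact Stmt3Aux.key 𝒩 𝒬 h𝒩.1 G (verbalSubgroup 𝒬 G) hVnormal hVmem hVQ H
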